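/- Let B be a class of compact Hausdorff topological spaces such that the product (in Top) of any two members of B is B-generated. Then for any B ∈ B and any B-generated space X, the product B × X (in Top) is B-generated. -/

import Mathlib

universe u

/-- Tube lemma variant: for `C` compact and `F` open in `K × Y`, the set of `y` whose
slice `C × {y}` lies in `F` is open. -/
theorem isOpen_setOf_compact_slice_subset {K Y : Type*} [TopologicalSpace K]
    [TopologicalSpace Y] {C : Set K} (hC : IsCompact C) {F : Set (K × Y)} (hF : IsOpen F) :
    IsOpen {y : Y | ∀ c ∈ C, (c, y) ∈ F} := by
  rw [isOpen_iff_mem_nhds]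
  intro y hy
  have hsub : C ×ˢ ({y} : Set Y) ⊆ F := by
    rintro ⟨c, y'⟩ ⟨hc, hy'⟩
    rcases hy' with rfl
    exact hy c hc
  obtain ⟨U, V, hU, hV, hCU, hyV, hUV⟩ :=
    generalized_tube_lemma hC isCompact_singleton hF hsub
  refine Filter.mem_of_superset (hV.mem_nhds (hyV rfl)) ?_
  intro v hv c hc
  exact hUV ⟨hCU hc, hv⟩

/-- A topological space `X` is `B`-generated (for a family `B` of spaces) if its topology
is final with respect to all continuous maps from members of `B` into `X`. -/
def BGenerated {ι : Type u} (B : ι → Type u) [∀ i, TopologicalSpace (B i)]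
    (X : Type u) [TopologicalSpace X] : Prop :=
  ∀ u : Set X, IsOpen u ↔ ∀ (i : ι) (f : C(B i, X)), IsOpen (f ⁻¹' u)

/-- If every member of `B` is compact Hausdorff and the binary product (in `Top`) of any
two members of `B` is `B`-generated, then for any `B ∈ B` and any `B`-generated space `X`,
the product `B × X` (in `Top`) is `B`-generated. -/
theorem bGenerated_prod_of_mem {ι : Type u} (B : ι → Type u) [∀ i, TopologicalSpace (B i)]
    [∀ i, CompactSpace (B i)] [∀ i, T2Space (B i)]
    (hprod : ∀ i j, BGenerated B (B i × B j))
    (X : Type u) [TopologicalSpace X] (hX : BGenerated B X) (i : ι) :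
    BGenerated B (B i × X) := by
  intro u
  constructor
  · intro hu j f
    exact f.continuous.isOpen_preimage u hu
  · intro H
    -- Step 1: for every probe `g : B j → X`, the preimage of `u` under `id × g` is open
    have hA : ∀ (j : ι) (g : C(B j, X)), IsOpen (Prod.map id g ⁻¹' u) := by
      intro j g
      rw [hprod i j]
      intro k h
      have := H k (((ContinuousMap.id (B i)).prodMap g).comp h)
      exact this
    rw [isOpen_iff_mem_nhds]
    rintro ⟨b₀, x₀⟩ hbx
    -- Step 2: the slice at x₀ is open in B i
    have hslice : IsOpen {b : B i | (b, x₀) ∈ u} :=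
      H i ⟨fun b => (b, x₀), by fun_prop⟩
    -- Step 3: choose a compact neighborhood C of b₀ inside the slice
    obtain ⟨C, hCn, hCsub, hCcomp⟩ :=
      local_compact_nhds (hslice.mem_nhds (by exact hbx))
    -- Step 4: W = points x whose tube C × {x} is in u; W is open since X is B-generated
    set W := {x : X | ∀ c ∈ C, (c, x) ∈ u} with hWdef
    have hW : IsOpen W := by
      rw [hX]
      intro j g
      have hF := hA j g
      have : g ⁻¹' W = {b : B j | ∀ c ∈ C, (c, b) ∈ Prod.map id g ⁻¹' u} := by
        ext b; simp [hWdef, Prod.map]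
      rw [this]
      exact isOpen_setOf_compact_slice_subset hCcomp hF
    have hx₀W : x₀ ∈ W := fun c hc => hCsub hc
    have hsub : interior C ×ˢ W ⊆ u := by
      rintro ⟨c, x⟩ ⟨hc, hx⟩
      exact hx c (interior_subset hc)
    exact Filter.mem_of_superset
      (((isOpen_interior.prod hW).mem_nhds ⟨mem_interior_iff_mem_nhds.2 hCn, hx₀W⟩)) hsub
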